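/- For the tessarine C with matrix representation (a+bi)·I₂ + (c+di)·J₂, the real part of C^ℓ (the real part of its diagonal entry) equals (1/2)·[((a−c)² + (b−d)²)^{ℓ/2}·cos(ℓ·arg((a−c)+i(b−d))) + ((a+c)² + (b+d)²)^{ℓ/2}·cos(ℓ·arg((a+c)+i(b+d)))] for every positive integer ℓ. -/

import Mathlib

/-- The tessarine `a + b î + c ĵ + d k̂` as the 2×2 complex matrix
`(a + b i) I₂ + (c + d i) J₂` with `J₂ = [[0,1],[1,0]]`. -/
noncomputable def tess (a b c d : ℝ) : Matrix (Fin 2) (Fin 2) ℂ :=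
  ((a : ℂ) + b * Complex.I) • (1 : Matrix (Fin 2) (Fin 2) ℂ)
    + ((c : ℂ) + d * Complex.I) • !![0, 1; 1, 0]

/-- The real part (coefficient of `1`) of a tessarine: the real part of the diagonal
entry of its matrix representation. -/
noncomputable def tessRe (M : Matrix (Fin 2) (Fin 2) ℂ) : ℝ := (M 0 0).re

noncomputable def S (z w : ℂ) : Matrix (Fin 2) (Fin 2) ℂ :=
  z • (1 : Matrix (Fin 2) (Fin 2) ℂ) + w • !![0, 1; 1, 0]

lemma S_eq (z w : ℂ) : S z w = !![z, w; w, z] := by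
  simp only [S, Matrix.one_fin_two]
  ext i j
  fin_cases i <;> fin_cases j <;> simp

lemma S_mul (z w z' w' : ℂ) : S z w * S z' w' = S (z*z' + w*w') (z*w' + w*z') := by
  rw [S_eq, S_eq, S_eq]
  ext i j
  fin_cases i <;> fin_cases j <;> simp [Matrix.mul_apply, Fin.sum_univ_two] <;> ring

lemma S_pow (z w : ℂ) (n : ℕ) :
    (S z w) ^ n = S (((z+w)^n + (z-w)^n)/2) (((z+w)^n - (z-w)^n)/2) := by
  induction n with
  | zero => simp [S_eq]; ext i j; fin_cases i <;> fin_cases j <;> simp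
  | succ n ih =>
    rw [pow_succ, ih, S_mul]
    congr 1 <;> ring

lemma re_pow (x y : ℝ) (n : ℕ) :
    (((x : ℂ) + y * Complex.I) ^ n).re
      = (x^2 + y^2) ^ ((n : ℝ)/2) * Real.cos (n * Complex.arg ((x:ℂ) + y * Complex.I)) := by
  set z : ℂ := (x:ℂ) + y * Complex.I with hz
  have habs : (x^2 + y^2) ^ ((n : ℝ)/2) = ‖z‖ ^ n := by
    have h1 : ‖z‖ = Real.sqrt (x^2 + y^2) := by
      simp [hz, Complex.norm_def, Complex.normSq_apply]
      ring_nf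
    rw [h1, Real.sqrt_eq_rpow, ← Real.rpow_natCast ((x^2+y^2) ^ ((1:ℝ)/2)) n,
      ← Real.rpow_mul (by positivity)]
    ring_nf
  rw [habs]
  conv_lhs => rw [← Complex.norm_mul_cos_add_sin_mul_I z]
  rw [mul_pow, Complex.cos_add_sin_mul_I_pow]
  simp [← Complex.ofReal_natCast, ← Complex.ofReal_mul, ← Complex.ofReal_cos, ← Complex.ofReal_sin,
    ← Complex.ofReal_pow]

/-- The real part of the `ℓ`-th power of the tessarine `a + b î + c ĵ + d k̂` equals
`(1/2) [((a-c)² + (b-d)²)^{ℓ/2} cos(ℓ arg((a-c) + (b-d)i))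
  + ((a+c)² + (b+d)²)^{ℓ/2} cos(ℓ arg((a+c) + (b+d)i))]`. -/
theorem tessarine_power_re (a b c d : ℝ) (ℓ : ℕ) (hℓ : 0 < ℓ) :
    tessRe ((tess a b c d) ^ ℓ)
      = (1 / 2) *
          (((a - c) ^ 2 + (b - d) ^ 2) ^ ((ℓ : ℝ) / 2)
              * Real.cos (ℓ * Complex.arg (((a - c : ℝ) : ℂ) + ((b - d : ℝ) : ℂ) * Complex.I))
            + ((a + c) ^ 2 + (b + d) ^ 2) ^ ((ℓ : ℝ) / 2)
              * Real.cos (ℓ * Complex.arg (((a + c : ℝ) : ℂ) + ((b + d : ℝ) : ℂ) * Complex.I))) := by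
  have htess : tess a b c d = S ((a:ℂ) + b * Complex.I) ((c:ℂ) + d * Complex.I) := rfl
  have hu : ((a:ℂ) + b * Complex.I) + ((c:ℂ) + d * Complex.I)
      = ((a + c : ℝ) : ℂ) + ((b + d : ℝ) : ℂ) * Complex.I := by push_cast; ring
  have hv : ((a:ℂ) + b * Complex.I) - ((c:ℂ) + d * Complex.I)
      = ((a - c : ℝ) : ℂ) + ((b - d : ℝ) : ℂ) * Complex.I := by push_cast; ring
  rw [htess, S_pow, hu, hv, S_eq]
  unfold tessRe
  simp only [Matrix.cons_val', Matrix.cons_val_zero, Matrix.empty_val',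
    Matrix.cons_val_fin_one, Matrix.of_apply]
  rw [Complex.div_ofNat_re, Complex.add_re, re_pow, re_pow]
  ring
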